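/- Suppose each of n agents has a matroid rank valuation v_i on subsets of a finite set O of items. Then every clean leximin allocation is envy-free up to one good (EF1), and every clean maximum Nash welfare (MNW) allocation is EF1. -/

import Mathlib

/-- An allocation: bundles are pairwise disjoint. -/
def IsAlloc {O : Type*} [DecidableEq O] {n : ℕ} (A : Fin n → Finset O) : Prop :=
  ∀ i j, i ≠ j → Disjoint (A i) (A j)

/-- A clean allocation: every item in every bundle has positive marginal gain. -/
def IsClean {O : Type*} [DecidableEq O] {n : ℕ} (v : Fin n → Finset O → ℤ)
    (A : Fin n → Finset O) : Prop :=
  ∀ i, ∀ o ∈ A i, 0 < v i (A i) - v i (A i \ {o})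

/-- Envy-freeness up to one good. -/
def EF1 {O : Type*} [DecidableEq O] {n : ℕ} (v : Fin n → Finset O → ℤ)
    (A : Fin n → Finset O) : Prop :=
  ∀ i j, v i (A j) ≤ v i (A i) ∨ ∃ o ∈ A j, v i (A j \ {o}) ≤ v i (A i)

/-- The vector of realized valuations, sorted in non-decreasing order. -/
def sVec {O : Type*} {n : ℕ} (v : Fin n → Finset O → ℤ)
    (A : Fin n → Finset O) : Fin n → ℤ :=
  (fun i => v i (A i)) ∘ Tuple.sort (fun i => v i (A i))

/-- The set of agents with positive realized value. -/
def posAgents {O : Type*} {n : ℕ} (v : Fin n → Finset O → ℤ)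
    (A : Fin n → Finset O) : Finset (Fin n) :=
  Finset.univ.filter fun i => 0 < v i (A i)

/-- Maximum Nash welfare allocation. -/
def IsMNW {O : Type*} [DecidableEq O] {n : ℕ} (v : Fin n → Finset O → ℤ)
    (A : Fin n → Finset O) : Prop :=
  IsAlloc A ∧
  (∀ B : Fin n → Finset O, IsAlloc B → (posAgents v B).card ≤ (posAgents v A).card) ∧
  (∀ B : Fin n → Finset O, IsAlloc B → (posAgents v B).card = (posAgents v A).card →
    ∏ i ∈ posAgents v B, v i (B i) ≤ ∏ i ∈ posAgents v A, v i (A i))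



section MRF
variable {O : Type*} [DecidableEq O] {w : Finset O → ℤ}

lemma mrf_marg (hbin : ∀ (S : Finset O) (o : O), o ∉ S →
    w (insert o S) - w S = 0 ∨ w (insert o S) - w S = 1)
    (S : Finset O) (o : O) : w S ≤ w (insert o S) ∧ w (insert o S) ≤ w S + 1 := by
  by_cases h : o ∈ S
  · rw [Finset.insert_eq_self.2 h]; omega
  · rcases hbin S o h with h1 | h1 <;> omega

lemma mrf_union_le (hbin : ∀ (S : Finset O) (o : O), o ∉ S →
    w (insert o S) - w S = 0 ∨ w (insert o S) - w S = 1)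
    (S T : Finset O) : w S ≤ w (S ∪ T) := by
  induction T using Finset.induction with
  | empty => simp
  | insert _ _ ha ih =>
      rw [Finset.union_insert]
      exact le_trans ih (mrf_marg hbin _ _).1

lemma mrf_mono (hbin : ∀ (S : Finset O) (o : O), o ∉ S →
    w (insert o S) - w S = 0 ∨ w (insert o S) - w S = 1)
    {S T : Finset O} (h : S ⊆ T) : w S ≤ w T := by
  have := mrf_union_le hbin S T
  rwa [Finset.union_eq_right.2 h] at this

lemma mrf_nonneg (h0 : w ∅ = 0)
    (hbin : ∀ (S : Finset O) (o : O), o ∉ S →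
      w (insert o S) - w S = 0 ∨ w (insert o S) - w S = 1)
    (S : Finset O) : 0 ≤ w S := by
  have := mrf_mono hbin (Finset.empty_subset S)
  omega

lemma mrf_le_card (h0 : w ∅ = 0)
    (hbin : ∀ (S : Finset O) (o : O), o ∉ S →
      w (insert o S) - w S = 0 ∨ w (insert o S) - w S = 1)
    (S : Finset O) : w S ≤ S.card := by
  induction S using Finset.induction with
  | empty => simp [h0]
  | @insert a T ha ih =>
      have := (mrf_marg hbin T a).2
      rw [Finset.card_insert_of_notMem ha]
      push_cast
      omega

lemma finset_erase_comm {α : Type*} [DecidableEq α] (s : Finset α) (a b : α) :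
    (s.erase a).erase b = (s.erase b).erase a := by
  ext x
  simp only [Finset.mem_erase]
  tauto

lemma mrf_clean_card (h0 : w ∅ = 0)
    (hbin : ∀ (S : Finset O) (o : O), o ∉ S →
      w (insert o S) - w S = 0 ∨ w (insert o S) - w S = 1)
    (hsub : ∀ (S T : Finset O), S ⊆ T → ∀ o ∉ T,
      w (insert o T) - w T ≤ w (insert o S) - w S)
    (S : Finset O) (hc : ∀ o ∈ S, 0 < w S - w (S \ {o})) : w S = S.card := by
  induction S using Finset.strongInduction with
  | _ S ih =>
    rcases S.eq_empty_or_nonempty with rfl | ⟨o, ho⟩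
    · simp [h0]
    · have hss : S.erase o ⊂ S := Finset.erase_ssubset ho
      have hclean' : ∀ o' ∈ S.erase o, 0 < w (S.erase o) - w (S.erase o \ {o'}) := by
        intro o' ho'
        obtain ⟨hne, ho'S⟩ := Finset.mem_erase.1 ho'
        have hS1 : S \ {o'} = S.erase o' := Finset.sdiff_singleton_eq_erase o' S
        have hS2 : S.erase o \ {o'} = (S.erase o').erase o := by
          rw [Finset.sdiff_singleton_eq_erase, finset_erase_comm]
        have hsubset : (S.erase o').erase o ⊆ S.erase o' := Finset.erase_subset _ _
        have ho'n1 : o' ∉ S.erase o' := Finset.notMem_erase o' S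
        have hins1 : insert o' (S.erase o') = S := Finset.insert_erase ho'S
        have hins2 : insert o' ((S.erase o').erase o) = S.erase o := by
          rw [finset_erase_comm, Finset.insert_erase (Finset.mem_erase.2 ⟨hne, ho'S⟩)]
        have := hsub ((S.erase o').erase o) (S.erase o') hsubset o' ho'n1
        rw [hins1, hins2] at this
        have hco' := hc o' (Finset.mem_erase.1 ho' |>.2)
        rw [hS1] at hco'
        rw [hS2]
        omega
      have hval : w (S.erase o) = (S.erase o).card := ih _ hss hclean'
      have hco := hc o ho
      rw [Finset.sdiff_singleton_eq_erase] at hco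
      have hins : insert o (S.erase o) = S := Finset.insert_erase ho
      have hm : w S ≤ w (S.erase o) + 1 := by
        have := (mrf_marg hbin (S.erase o) o).2
        rwa [hins] at this
      have hcard : (S.erase o).card = S.card - 1 := Finset.card_erase_of_mem ho
      have hpos : 1 ≤ S.card := Finset.card_pos.2 ⟨o, ho⟩
      rw [hval, hcard] at hco hm
      push_cast [Nat.cast_sub hpos] at hco hm
      omega

lemma mrf_exchange
    (hbin : ∀ (S : Finset O) (o : O), o ∉ S →
      w (insert o S) - w S = 0 ∨ w (insert o S) - w S = 1)
    (hsub : ∀ (S T : Finset O), S ⊆ T → ∀ o ∉ T,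
      w (insert o T) - w T ≤ w (insert o S) - w S)
    {S T : Finset O} (h : w S < w T) :
    ∃ o ∈ T, o ∉ S ∧ w (insert o S) = w S + 1 := by
  by_contra hcon
  push_neg at hcon
  have key : ∀ T' : Finset O, T' ⊆ T → w (S ∪ T') = w S := by
    intro T'
    induction T' using Finset.induction with
    | empty => simp
    | @insert a T' ha ih =>
        intro hsubT
        have hT'T : T' ⊆ T := (Finset.insert_subset_iff.1 hsubT).2
        have haT : a ∈ T := (Finset.insert_subset_iff.1 hsubT).1
        rw [Finset.union_insert]
        by_cases haST : a ∈ S ∪ T'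
        · rw [Finset.insert_eq_self.2 haST, ih hT'T]
        · have h1 := hsub S (S ∪ T') Finset.subset_union_left a haST
          have h2 : w (insert a S) ≤ w S := by
            by_cases haS : a ∈ S
            · rw [Finset.insert_eq_self.2 haS]
            · have hne := hcon a haT haS
              rcases hbin S a haS with h3 | h3 <;> omega
          have h3 := (mrf_marg hbin (S ∪ T') a).1
          have h4 := ih hT'T
          omega
  have h5 := key T (subset_refl T)
  have h6 : w T ≤ w (S ∪ T) := by
    rw [Finset.union_comm]
    exact mrf_union_le hbin T S
  omega

end MRF

lemma card_filter_perm {n : ℕ} (σ : Equiv.Perm (Fin n)) (p : Fin n → Prop) [DecidablePred p] :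
    (Finset.univ.filter fun k => p (σ k)).card = (Finset.univ.filter p).card := by
  apply Finset.card_bij (fun k _ => σ k)
  · intro a ha; simp only [Finset.mem_filter, Finset.mem_univ, true_and] at ha ⊢; exact ha
  · intro a _ b _ h; exact σ.injective h
  · intro b hb
    refine ⟨σ.symm b, ?_, by simp⟩
    simp only [Finset.mem_filter, Finset.mem_univ, true_and] at hb ⊢
    simpa using hb

lemma mem_lower_iff {n : ℕ} {S : Finset (Fin n)}
    (h : ∀ a b : Fin n, a ≤ b → b ∈ S → a ∈ S) (k : Fin n) :
    k ∈ S ↔ (k : ℕ) < S.card := by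
  constructor
  · intro hk
    have hsub : Finset.Iic k ⊆ S := fun j hj => h j k (Finset.mem_Iic.1 hj) hk
    have := Finset.card_le_card hsub
    rw [Fin.card_Iic] at this; omega
  · intro hk
    by_contra hkS
    have hsub : S ⊆ Finset.Iio k := by
      intro j hj
      rw [Finset.mem_Iio]
      by_contra hjk
      exact hkS (h k j (le_of_not_gt hjk) hj)
    have := Finset.card_le_card hsub
    rw [Fin.card_Iio] at this; omega

lemma sorted_lex_lt {n : ℕ} {s s' : Fin n → ℤ} (hs : Monotone s) (hs' : Monotone s')
    (t : ℤ)
    (hle : ∀ u : ℤ, u ≤ t →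
      (Finset.univ.filter fun k => s' k ≤ u).card ≤ (Finset.univ.filter fun k => s k ≤ u).card)
    (hlt : (Finset.univ.filter fun k => s' k ≤ t).card <
      (Finset.univ.filter fun k => s k ≤ t).card) :
    toLex s < toLex s' := by
  have stat : ∀ (f : Fin n → ℤ), Monotone f → ∀ (u : ℤ) (k : Fin n),
      f k ≤ u ↔ (k : ℕ) < (Finset.univ.filter fun m => f m ≤ u).card := by
    intro f hf u k
    have hlow : ∀ a b : Fin n, a ≤ b → b ∈ Finset.univ.filter (fun m => f m ≤ u) →
        a ∈ Finset.univ.filter (fun m => f m ≤ u) := by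
      intro a b hab hb
      simp only [Finset.mem_filter, Finset.mem_univ, true_and] at hb ⊢
      exact le_trans (hf hab) hb
    have := mem_lower_iff hlow k
    simpa using this
  have hcn : (Finset.univ.filter fun k => s' k ≤ t).card < n := by
    have h1 : (Finset.univ.filter fun k => s k ≤ t).card ≤ n := by
      have := Finset.card_filter_le Finset.univ (fun k => s k ≤ t)
      simpa using this
    omega
  set k : Fin n := ⟨(Finset.univ.filter fun k => s' k ≤ t).card, hcn⟩ with hk
  have hsk : s k ≤ t := (stat s hs t k).2 hlt
  have hs'k : ¬ s' k ≤ t := by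
    rw [stat s' hs' t k]
    simp [hk]
  have hne : s k ≠ s' k := by
    intro h; rw [h] at hsk; exact hs'k hsk
  have hDne : (Finset.univ.filter fun m : Fin n => s m ≠ s' m).Nonempty := ⟨k, by simp [hne]⟩
  set D := Finset.univ.filter fun m : Fin n => s m ≠ s' m with hD
  set k0 := D.min' hDne with hk0
  have hk0D : k0 ∈ D := D.min'_mem hDne
  have hk0le : k0 ≤ k := D.min'_le k (by simp [hD, hne])
  have hne0 : s k0 ≠ s' k0 := by
    have := hk0D
    rw [hD] at this
    simpa using this
  have heq : ∀ j, j < k0 → s j = s' j := by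
    intro j hj
    by_contra hje
    exact absurd (D.min'_le j (by simp [hD, hje])) (not_le.2 hj)
  have hlt0 : s k0 < s' k0 := by
    rcases lt_or_gt_of_ne hne0 with h | h
    · exact h
    exfalso
    have hu_le : s' k0 ≤ t := le_trans (le_of_lt h) (le_trans (hs hk0le) hsk)
    have h1 : (k0 : ℕ) + 1 ≤ (Finset.univ.filter fun m => s' m ≤ s' k0).card := by
      have hsub : Finset.Iic k0 ⊆ Finset.univ.filter fun m => s' m ≤ s' k0 := by
        intro j hj
        simp only [Finset.mem_filter, Finset.mem_univ, true_and]
        exact hs' (Finset.mem_Iic.1 hj)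
      have := Finset.card_le_card hsub
      rw [Fin.card_Iic] at this; omega
    have h2 : (Finset.univ.filter fun m => s m ≤ s' k0).card ≤ (k0 : ℕ) := by
      have hsub : (Finset.univ.filter fun m => s m ≤ s' k0) ⊆ Finset.Iio k0 := by
        intro j hj
        simp only [Finset.mem_filter, Finset.mem_univ, true_and] at hj
        rw [Finset.mem_Iio]
        by_contra hjk
        have := hs (le_of_not_gt hjk)
        omega
      have := Finset.card_le_card hsub
      rw [Fin.card_Iio] at this; omega
    have := hle (s' k0) hu_le
    omega
  exact ⟨k0, heq, hlt0⟩

lemma alloc_transfer {O : Type*} [DecidableEq O] {n : ℕ} {A : Fin n → Finset O}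
    (hA : IsAlloc A) {i j : Fin n} (hij : i ≠ j) {o : O} (ho : o ∈ A j) :
    IsAlloc (fun k => if k = i then insert o (A i) else if k = j then A j \ {o} else A k) := by
  intro k l hkl
  dsimp only
  have hoA : ∀ m, m ≠ j → o ∉ A m := fun m hm => Finset.disjoint_left.1 (hA j m (Ne.symm hm)) ho
  have d1 : ∀ m, m ≠ i → m ≠ j → Disjoint (insert o (A i)) (A m) := by
    intro m hmi hmj
    rw [Finset.disjoint_insert_left]
    exact ⟨hoA m hmj, hA i m (Ne.symm hmi)⟩
  have d2 : Disjoint (insert o (A i)) (A j \ {o}) := by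
    rw [Finset.disjoint_insert_left]
    exact ⟨by simp, Finset.disjoint_of_subset_right Finset.sdiff_subset (hA i j hij)⟩
  have d3 : ∀ m, m ≠ j → Disjoint (A j \ {o}) (A m) :=
    fun m hm => Finset.disjoint_of_subset_left Finset.sdiff_subset (hA j m (Ne.symm hm))
  by_cases hki : k = i
  · subst hki
    rw [if_pos rfl]
    by_cases hlj : l = j
    · subst hlj
      rw [if_neg (Ne.symm hij), if_pos rfl]
      exact d2
    · rw [if_neg (fun h => hkl h.symm), if_neg hlj]
      exact d1 l (fun h => hkl h.symm) hlj
  · rw [if_neg hki]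
    by_cases hkj : k = j
    · subst hkj
      rw [if_pos rfl]
      by_cases hli : l = i
      · subst hli
        rw [if_pos rfl]
        exact d2.symm
      · rw [if_neg hli, if_neg (fun h => hkl h.symm)]
        exact d3 l (fun h => hkl h.symm)
    · rw [if_neg hkj]
      by_cases hli : l = i
      · subst hli
        rw [if_pos rfl]
        exact (d1 k hki hkj).symm
      · rw [if_neg hli]
        by_cases hlj : l = j
        · subst hlj
          rw [if_pos rfl]
          exact (d3 k hkj).symm
        · rw [if_neg hlj]
          exact hA k l hkl

/-- For matroid rank valuations, every clean leximin
allocation is EF1, and every clean MNW allocation is EF1. -/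
theorem clean_leximin_and_MNW_are_EF1
    {O : Type*} [DecidableEq O] [Fintype O] {n : ℕ}
    (v : Fin n → Finset O → ℤ)
    (h0 : ∀ i, v i ∅ = 0)
    (hbin : ∀ i (S : Finset O) (o : O), o ∉ S →
      v i (insert o S) - v i S = 0 ∨ v i (insert o S) - v i S = 1)
    (hsub : ∀ i (S T : Finset O), S ⊆ T → ∀ o ∉ T,
      v i (insert o T) - v i T ≤ v i (insert o S) - v i S) :
    (∀ A : Fin n → Finset O, IsAlloc A → IsClean v A →
      (∀ B : Fin n → Finset O, IsAlloc B → toLex (sVec v B) ≤ toLex (sVec v A)) →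
      EF1 v A)
    ∧
    (∀ A : Fin n → Finset O, IsClean v A → IsMNW v A → EF1 v A) := by
  have main : ∀ A : Fin n → Finset O, IsAlloc A → IsClean v A → ∀ i j : Fin n,
      ¬(v i (A j) ≤ v i (A i) ∨ ∃ o ∈ A j, v i (A j \ {o}) ≤ v i (A i)) →
      ∃ B : Fin n → Finset O, IsAlloc B ∧ i ≠ j ∧
        v i (B i) = v i (A i) + 1 ∧ v j (B j) = v j (A j) - 1 ∧
        (∀ k, k ≠ i → k ≠ j → B k = A k) ∧
        v i (A i) + 2 ≤ v j (A j) ∧ 0 ≤ v i (A i) := by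
    intro A hA hclean i j hno
    push_neg at hno
    obtain ⟨hno1, hno2⟩ := hno
    have hij : i ≠ j := by rintro rfl; exact lt_irrefl _ hno1
    obtain ⟨o, hoT, hoS, hins⟩ := mrf_exchange (hbin i) (hsub i) hno1
    have hale : 0 ≤ v i (A i) := mrf_nonneg (h0 i) (hbin i) _
    have h2 := hno2 o hoT
    have h3 : v i (A j \ {o}) ≤ ((A j \ {o}).card : ℤ) := mrf_le_card (h0 i) (hbin i) _
    have hcard_e : (A j \ {o}).card = (A j).card - 1 := by
      rw [Finset.sdiff_singleton_eq_erase]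
      exact Finset.card_erase_of_mem hoT
    have hjpos : 1 ≤ (A j).card := Finset.card_pos.2 ⟨o, hoT⟩
    have hcast : ((A j \ {o}).card : ℤ) = ((A j).card : ℤ) - 1 := by
      rw [hcard_e, Nat.cast_sub hjpos, Nat.cast_one]
    have hb : v j (A j) = ((A j).card : ℤ) :=
      mrf_clean_card (h0 j) (hbin j) (hsub j) _ (fun o' ho' => hclean j o' ho')
    have hb2 : v i (A i) + 2 ≤ v j (A j) := by omega
    have hins_j : insert o (A j \ {o}) = A j := by
      rw [Finset.sdiff_singleton_eq_erase]
      exact Finset.insert_erase hoT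
    have hjm : v j (A j) ≤ v j (A j \ {o}) + 1 := by
      have := (mrf_marg (hbin j) (A j \ {o}) o).2
      rwa [hins_j] at this
    have hjle : v j (A j \ {o}) ≤ ((A j \ {o}).card : ℤ) := mrf_le_card (h0 j) (hbin j) _
    have hjv : v j (A j \ {o}) = v j (A j) - 1 := by omega
    refine ⟨fun k => if k = i then insert o (A i) else if k = j then A j \ {o} else A k,
      alloc_transfer hA hij hoT, hij, ?_, ?_, ?_, hb2, hale⟩
    · dsimp only
      rw [if_pos rfl]
      exact hins
    · dsimp only
      rw [if_neg (Ne.symm hij), if_pos rfl]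
      exact hjv
    · intro k hki hkj
      dsimp only
      rw [if_neg hki, if_neg hkj]
  constructor
  · intro A hA hclean hlex i j
    by_contra hno
    obtain ⟨B, hB, hij, hBi, hBj, hBk, hab, ha0⟩ := main A hA hclean i j hno
    have hcontra := hlex B hB
    have hsubs : ∀ u : ℤ, u ≤ v i (A i) →
        (Finset.univ.filter fun k => v k (B k) ≤ u) ⊆
          (Finset.univ.filter fun k => v k (A k) ≤ u) := by
      intro u hu k hk
      simp only [Finset.mem_filter, Finset.mem_univ, true_and] at hk ⊢
      rcases eq_or_ne k i with rfl | hki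
      · rw [hBi] at hk; omega
      rcases eq_or_ne k j with rfl | hkj
      · rw [hBj] at hk; omega
      · rwa [hBk k hki hkj] at hk
    have hcard : ∀ u : ℤ, u ≤ v i (A i) →
        (Finset.univ.filter fun k => v k (B k) ≤ u).card ≤
          (Finset.univ.filter fun k => v k (A k) ≤ u).card :=
      fun u hu => Finset.card_le_card (hsubs u hu)
    have hstrict : (Finset.univ.filter fun k => v k (B k) ≤ v i (A i)).card <
        (Finset.univ.filter fun k => v k (A k) ≤ v i (A i)).card := by
      apply Finset.card_lt_card
      refine ⟨hsubs _ le_rfl, fun hsup => ?_⟩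
      have hi : i ∈ Finset.univ.filter fun k => v k (A k) ≤ v i (A i) := by simp
      have hmem := hsup hi
      simp only [Finset.mem_filter, Finset.mem_univ, true_and] at hmem
      rw [hBi] at hmem
      omega
    have hmA : Monotone (sVec v A) := Tuple.monotone_sort _
    have hmB : Monotone (sVec v B) := Tuple.monotone_sort _
    have hcountA : ∀ u : ℤ, (Finset.univ.filter fun k => sVec v A k ≤ u).card =
        (Finset.univ.filter fun k => v k (A k) ≤ u).card :=
      fun u => card_filter_perm (Tuple.sort fun k => v k (A k)) (fun k => v k (A k) ≤ u)
    have hcountB : ∀ u : ℤ, (Finset.univ.filter fun k => sVec v B k ≤ u).card =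
        (Finset.univ.filter fun k => v k (B k) ≤ u).card :=
      fun u => card_filter_perm (Tuple.sort fun k => v k (B k)) (fun k => v k (B k) ≤ u)
    have hflt : toLex (sVec v A) < toLex (sVec v B) := by
      apply sorted_lex_lt hmA hmB (v i (A i))
      · intro u hu
        rw [hcountA u, hcountB u]
        exact hcard u hu
      · rw [hcountA, hcountB]
        exact hstrict
    exact hflt.not_ge hcontra
  · intro A hclean hMNW i j
    obtain ⟨hA, hcard, hprod⟩ := hMNW
    by_contra hno
    obtain ⟨B, hB, hij, hBi, hBj, hBk, hab, ha0⟩ := main A hA hclean i j hno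
    by_cases ha : v i (A i) = 0
    · have hpos : posAgents v B = insert i (posAgents v A) := by
        ext k
        simp only [posAgents, Finset.mem_filter, Finset.mem_univ, true_and, Finset.mem_insert]
        rcases eq_or_ne k i with rfl | hki
        · rw [hBi]
          constructor
          · intro _; exact Or.inl rfl
          · intro _; omega
        rcases eq_or_ne k j with rfl | hkj
        · rw [hBj]
          constructor
          · intro _; exact Or.inr (by omega)
          · intro _; omega
        · rw [hBk k hki hkj]
          constructor
          · intro h; exact Or.inr h
          · rintro (h | h)
            · exact absurd h.symm (Ne.symm hki)
            · exact h
      have hiP : i ∉ posAgents v A := by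
        simp only [posAgents, Finset.mem_filter, Finset.mem_univ, true_and]
        omega
      have hgt : (posAgents v A).card < (posAgents v B).card := by
        rw [hpos, Finset.card_insert_of_notMem hiP]
        omega
      have := hcard B hB
      omega
    · have hapos : 0 < v i (A i) := lt_of_le_of_ne ha0 (Ne.symm ha)
      have hpos : posAgents v B = posAgents v A := by
        ext k
        simp only [posAgents, Finset.mem_filter, Finset.mem_univ, true_and]
        rcases eq_or_ne k i with rfl | hki
        · rw [hBi]; constructor <;> intro <;> omega
        rcases eq_or_ne k j with rfl | hkj
        · rw [hBj]; constructor <;> intro <;> omega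
        · rw [hBk k hki hkj]
      have hple := hprod B hB (by rw [hpos])
      rw [hpos] at hple
      have hiP : i ∈ posAgents v A := by
        simp only [posAgents, Finset.mem_filter, Finset.mem_univ, true_and]
        exact hapos
      have hjP : j ∈ posAgents v A := by
        simp only [posAgents, Finset.mem_filter, Finset.mem_univ, true_and]
        omega
      have hjP' : j ∈ (posAgents v A).erase i := Finset.mem_erase.2 ⟨Ne.symm hij, hjP⟩
      have hsplitA : ∏ k ∈ posAgents v A, v k (A k) =
          v i (A i) * (v j (A j) * ∏ k ∈ ((posAgents v A).erase i).erase j, v k (A k)) := by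
        rw [← Finset.mul_prod_erase (posAgents v A) _ hiP,
          ← Finset.mul_prod_erase ((posAgents v A).erase i) _ hjP']
      have hsplitB : ∏ k ∈ posAgents v A, v k (B k) =
          v i (B i) * (v j (B j) * ∏ k ∈ ((posAgents v A).erase i).erase j, v k (B k)) := by
        rw [← Finset.mul_prod_erase (posAgents v A) _ hiP,
          ← Finset.mul_prod_erase ((posAgents v A).erase i) _ hjP']
      have hcongr : ∏ k ∈ ((posAgents v A).erase i).erase j, v k (B k) =
          ∏ k ∈ ((posAgents v A).erase i).erase j, v k (A k) := by
        apply Finset.prod_congr rfl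
        intro k hk
        have hkj := (Finset.mem_erase.1 hk).1
        have hki := (Finset.mem_erase.1 (Finset.mem_erase.1 hk).2).1
        rw [hBk k hki hkj]
      have hMpos : 0 < ∏ k ∈ ((posAgents v A).erase i).erase j, v k (A k) := by
        apply Finset.prod_pos
        intro k hk
        have hkP : k ∈ posAgents v A := Finset.mem_of_mem_erase (Finset.mem_of_mem_erase hk)
        simpa only [posAgents, Finset.mem_filter, Finset.mem_univ, true_and] using hkP
      have hlt2 : v i (A i) * v j (A j) < v i (B i) * v j (B j) := by
        rw [hBi, hBj]
        nlinarith
      have hstrict : ∏ k ∈ posAgents v A, v k (A k) < ∏ k ∈ posAgents v A, v k (B k) := by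
        rw [hsplitA, hsplitB, hcongr, ← mul_assoc, ← mul_assoc]
        exact mul_lt_mul_of_pos_right hlt2 hMpos
      exact absurd hple (not_le.2 hstrict)
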